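/- Let a, b, c, d, i be points in ℝ³ with the vector n = (b − a) × (i − a) nonzero (i.e., a, b, i are affinely independent). Suppose there exist affine maps F₁, F₂ : ℝ³ → ℝ such that F₁(a) = F₁(b) = F₁(c) = 0, F₁(d) < 0, F₁(i) < 0, and F₂(a) = F₂(b) = F₂(d) = 0, F₂(c) < 0, F₂(i) < 0. Then ((c − a) · n) · ((d − a) · n) < 0; that is, c and d lie strictly on opposite sides of the plane through a, b, and i. -/
import Mathlib
open Matrix

lemma key_id (u w x v : Fin 3 → ℝ) (h : v ⬝ᵥ u = 0) :
    (crossProduct u w ⬝ᵥ crossProduct u w) * (v ⬝ᵥ x) =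
      (x ⬝ᵥ crossProduct (crossProduct u w) u) * (v ⬝ᵥ w)
        + (x ⬝ᵥ crossProduct u w) * (v ⬝ᵥ crossProduct u w) := by
  simp only [cross_apply, dotProduct, Fin.sum_univ_three, Matrix.cons_val_zero,
    Matrix.cons_val_one, Matrix.head_cons, Matrix.cons_val_two, Matrix.tail_cons] at *
  linear_combination ((x 0 * u 0 + x 1 * u 1 + x 2 * u 2) * (w 0 * w 0 + w 1 * w 1 + w 2 * w 2)
    - (x 0 * w 0 + x 1 * w 1 + x 2 * w 2) * (u 0 * w 0 + u 1 * w 1 + u 2 * w 2)) * h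

theorem stmt1 (a b c d i : Fin 3 → ℝ)
    (hn : crossProduct (b - a) (i - a) ≠ 0)
    (F₁ F₂ : (Fin 3 → ℝ) →ᵃ[ℝ] ℝ)
    (hF₁a : F₁ a = 0) (hF₁b : F₁ b = 0) (hF₁c : F₁ c = 0)
    (hF₁d : F₁ d < 0) (hF₁i : F₁ i < 0)
    (hF₂a : F₂ a = 0) (hF₂b : F₂ b = 0) (hF₂d : F₂ d = 0)
    (hF₂c : F₂ c < 0) (hF₂i : F₂ i < 0) :
    ((c - a) ⬝ᵥ crossProduct (b - a) (i - a)) *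
      ((d - a) ⬝ᵥ crossProduct (b - a) (i - a)) < 0 := by
  set u := b - a with hu
  set w := i - a with hw
  set n := crossProduct u w with hn'
  -- vector representations of the linear parts
  set v₁ : Fin 3 → ℝ := fun j => F₁.linear (fun k => if j = k then 1 else 0) with hv₁
  set v₂ : Fin 3 → ℝ := fun j => F₂.linear (fun k => if j = k then 1 else 0) with hv₂
  have hrep₁ : ∀ x, F₁.linear x = v₁ ⬝ᵥ x := by
    intro x
    rw [LinearMap.pi_apply_eq_sum_univ, dotProduct]
    exact Finset.sum_congr rfl fun j _ => by rw [smul_eq_mul, mul_comm]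
  have hrep₂ : ∀ x, F₂.linear x = v₂ ⬝ᵥ x := by
    intro x
    rw [LinearMap.pi_apply_eq_sum_univ, dotProduct]
    exact Finset.sum_congr rfl fun j _ => by rw [smul_eq_mul, mul_comm]
  have hlin₁ : ∀ x : Fin 3 → ℝ, v₁ ⬝ᵥ (x - a) = F₁ x - F₁ a := by
    intro x
    have h := F₁.map_vadd a (x - a)
    simp only [vadd_eq_add, sub_add_cancel] at h
    rw [← hrep₁, h]; ring
  have hlin₂ : ∀ x : Fin 3 → ℝ, v₂ ⬝ᵥ (x - a) = F₂ x - F₂ a := by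
    intro x
    have h := F₂.map_vadd a (x - a)
    simp only [vadd_eq_add, sub_add_cancel] at h
    rw [← hrep₂, h]; ring
  have h1u : v₁ ⬝ᵥ u = 0 := by rw [hu, hlin₁, hF₁b, hF₁a, sub_zero]
  have h2u : v₂ ⬝ᵥ u = 0 := by rw [hu, hlin₂, hF₂b, hF₂a, sub_zero]
  have hp : v₁ ⬝ᵥ w < 0 := by rw [hw, hlin₁, hF₁a, sub_zero]; exact hF₁i
  have hr : v₂ ⬝ᵥ w < 0 := by rw [hw, hlin₂, hF₂a, sub_zero]; exact hF₂i
  have h1c : v₁ ⬝ᵥ (c - a) = 0 := by rw [hlin₁, hF₁c, hF₁a, sub_zero]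
  have h2d : v₂ ⬝ᵥ (d - a) = 0 := by rw [hlin₂, hF₂d, hF₂a, sub_zero]
  have h1d : v₁ ⬝ᵥ (d - a) < 0 := by rw [hlin₁, hF₁a, sub_zero]; exact hF₁d
  have h2c : v₂ ⬝ᵥ (c - a) < 0 := by rw [hlin₂, hF₂a, sub_zero]; exact hF₂c
  have hN : 0 < n ⬝ᵥ n :=
    lt_of_le_of_ne (Finset.sum_nonneg fun j _ => mul_self_nonneg _)
      (fun h => hn (dotProduct_self_eq_zero.mp h.symm))
  set p := v₁ ⬝ᵥ w
  set q := v₁ ⬝ᵥ n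
  set r := v₂ ⬝ᵥ w
  set s := v₂ ⬝ᵥ n
  set C := (c - a) ⬝ᵥ n
  set D := (d - a) ⬝ᵥ n
  set Cm := (c - a) ⬝ᵥ crossProduct n u
  set Dm := (d - a) ⬝ᵥ crossProduct n u
  have e1 : Cm * p + C * q = 0 := by
    have := key_id u w (c - a) v₁ h1u
    rw [h1c, mul_zero] at this
    linarith [this]
  have e2 : Dm * r + D * s = 0 := by
    have := key_id u w (d - a) v₂ h2u
    rw [h2d, mul_zero] at this
    linarith [this]
  have e3 : Dm * p + D * q < 0 := by
    have hk := key_id u w (d - a) v₁ h1u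
    rw [← hk]
    exact mul_neg_of_pos_of_neg hN h1d
  have e4 : Cm * r + C * s < 0 := by
    have hk := key_id u w (c - a) v₂ h2u
    rw [← hk]
    exact mul_neg_of_pos_of_neg hN h2c
  have hC : 0 < C * (p * s - q * r) := by
    have h' : p * (Cm * r + C * s) = C * (p * s - q * r) := by linear_combination r * e1
    rw [← h']; exact mul_pos_of_neg_of_neg hp e4
  have hD : 0 < (-D) * (p * s - q * r) := by
    have h' : r * (Dm * p + D * q) = (-D) * (p * s - q * r) := by linear_combination p * e2
    rw [← h']; exact mul_pos_of_neg_of_neg hr e3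
  nlinarith [mul_pos hC hD, sq_nonneg (p * s - q * r)]
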